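/- Let 𝒪 be a nonmaximal order in an algebraic number field K with ring of integers 𝒪_K and conductor 𝔠 := {x ∈ K : x𝒪_K ⊆ 𝒪}. Let m be the least positive integer with m𝒪_K ⊆ 𝒪, and let H ⊆ 𝒪_K be a complete set of representatives for the nontrivial cosets of m𝒪_K in 𝒪_K (so 𝒪_K = m𝒪_K ⊔ ⊔_{h∈H}(h + m𝒪_K)). For h ∈ H let n_h be the least positive integer with n_h𝒪_K ⊆ h𝒪_K and set h' := n_h/h ∈ 𝒪_K; define the fractional 𝒪-ideal I_h := (1/h')·m𝒪 ∩ 𝒪_K if h' ∈ 𝔠, and I_h := (1/h')·𝒪 ∩ 𝒪_K if h' ∉ 𝔠. Then for every h ∈ H one has h + m𝒪_K ⊆ I_h and I_h ⊊ 𝒪_K, and moreover 𝒪_K = ⋃_{h∈H} I_h. -/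

import Mathlib

open scoped Classical

/-- Let `𝒪` be a nonmaximal order in a number field `K` with ring of integers
`𝒪_K = {x ∈ K : x integral over ℤ}` and conductor `𝔠 = {c ∈ K : c𝒪_K ⊆ 𝒪}`. Let `m` be
the least positive integer with `m𝒪_K ⊆ 𝒪` and let `H` be a complete set of
representatives for the nontrivial cosets of `m𝒪_K` in `𝒪_K`. For `h ∈ H`, let `n h` be
the least positive integer with `(n h)𝒪_K ⊆ h𝒪_K`, `h' := n h / h ∈ 𝒪_K`, and set
`I h := (1/h')·m𝒪 ∩ 𝒪_K` if `h' ∈ 𝔠` and `I h := (1/h')·𝒪 ∩ 𝒪_K` otherwise. Then for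
every `h ∈ H` one has `h + m𝒪_K ⊆ I h` and `I h ⊊ 𝒪_K`, and `𝒪_K = ⋃_{h∈H} I h`. -/
theorem statement16 (K : Type*) [Field K] [NumberField K] (O : Subring K)
    (hOsub : ∀ x ∈ O, IsIntegral ℤ x)
    (hfree : Nonempty (Module.Basis (Fin (Module.finrank ℚ K)) ℤ O))
    (hnonmax : (O : Set K) ≠ {x : K | IsIntegral ℤ x})
    (m : ℕ) (hm : 0 < m)
    (hmO : ∀ y : K, IsIntegral ℤ y → (m : K) * y ∈ O)
    (hmmin : ∀ m' : ℕ, 0 < m' → (∀ y : K, IsIntegral ℤ y → (m' : K) * y ∈ O) → m ≤ m')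
    (H : Set K)
    (hH1 : ∀ h ∈ H, IsIntegral ℤ h)
    (hH2 : ∀ h ∈ H, ¬ ∃ y : K, IsIntegral ℤ y ∧ h = (m : K) * y)
    (hH3 : ∀ x : K, IsIntegral ℤ x → (¬ ∃ y : K, IsIntegral ℤ y ∧ x = (m : K) * y) →
      ∃ h ∈ H, ∃ y : K, IsIntegral ℤ y ∧ x - h = (m : K) * y)
    (hH4 : ∀ h₁ ∈ H, ∀ h₂ ∈ H,
      (∃ y : K, IsIntegral ℤ y ∧ h₁ - h₂ = (m : K) * y) → h₁ = h₂)
    (n : K → ℕ)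
    (hn : ∀ h ∈ H, 0 < n h ∧
      ∀ y : K, IsIntegral ℤ y → ∃ z : K, IsIntegral ℤ z ∧ (n h : K) * y = h * z)
    (hnmin : ∀ h ∈ H, ∀ k : ℕ, 0 < k →
      (∀ y : K, IsIntegral ℤ y → ∃ z : K, IsIntegral ℤ z ∧ (k : K) * y = h * z) →
      n h ≤ k)
    (I : K → Set K)
    (hI : ∀ h ∈ H, I h =
      if ∀ y : K, IsIntegral ℤ y → ((n h : K) / h) * y ∈ O then
        {x : K | IsIntegral ℤ x ∧ ∃ y ∈ O, x = (h / (n h : K)) * ((m : K) * y)}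
      else
        {x : K | IsIntegral ℤ x ∧ ∃ y ∈ O, x = (h / (n h : K)) * y}) :
    (∀ h ∈ H, (∀ y : K, IsIntegral ℤ y → h + (m : K) * y ∈ I h) ∧
      I h ⊂ {x : K | IsIntegral ℤ x}) ∧
    {x : K | IsIntegral ℤ x} = ⋃ h ∈ H, I h := by
  classical
  -- ℤ-multiples lie in O
  have hZle : ∀ k : ℤ, (k : K) ∈ O := fun k => intCast_mem O k
  have hmK : (m : K) ≠ 0 := Nat.cast_ne_zero.mpr hm.ne'
  have hmint : IsIntegral ℤ ((m : K)) := by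
    simpa using isIntegral_algebraMap (A := K) (x := (m : ℤ))
  have hm1 : 1 < m := by
    by_contra hle
    have hm1' : m = 1 := le_antisymm (not_lt.mp hle) hm
    apply hnonmax
    ext x
    simp only [SetLike.mem_coe, Set.mem_setOf_eq]
    exact ⟨hOsub x, fun hx => by simpa [hm1'] using hmO x hx⟩
  have hne : ∀ h ∈ H, h ≠ 0 := by
    intro h hh h0
    exact hH2 h hh ⟨0, isIntegral_zero, by simp [h0]⟩
  have hNne : ∀ h ∈ H, ((n h : K)) ≠ 0 := fun h hh =>
    Nat.cast_ne_zero.mpr (hn h hh).1.ne'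
  have h'int : ∀ h ∈ H, IsIntegral ℤ ((n h : K) / h) := by
    intro h hh
    obtain ⟨z, hz, hzeq⟩ := (hn h hh).2 1 isIntegral_one
    have e : (n h : K) / h = z := by
      rw [div_eq_iff (hne h hh)]
      linear_combination hzeq
    rwa [e]
  -- if h' is in the conductor then m ∣ n h
  have hdvd : ∀ h ∈ H, (∀ y : K, IsIntegral ℤ y → ((n h : K) / h) * y ∈ O) → m ∣ n h := by
    intro h hh P
    set d := Nat.gcd m (n h) with hd
    have hdpos : 0 < d := Nat.gcd_pos_of_pos_left _ hm
    have hdmem : ∀ y : K, IsIntegral ℤ y → (d : K) * y ∈ O := by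
      intro y hy
      have hbez := Nat.gcd_eq_gcd_ab m (n h)
      have hbezK : (d : K) = (m : K) * ((Nat.gcdA m (n h) : ℤ) : K)
          + (n h : K) * ((Nat.gcdB m (n h) : ℤ) : K) := by
        have := congrArg (fun z : ℤ => (z : K)) hbez
        push_cast at this ⊢
        simpa using this
      have h1 : (m : K) * y ∈ O := hmO y hy
      have h2 : (n h : K) * y ∈ O := by
        have hmem := P (h * y) ((hH1 h hh).mul hy)
        have e : (n h : K) / h * (h * y) = (n h : K) * y := by
          field_simp [hne h hh]
        rwa [e] at hmem
      have hsum := O.add_mem (O.mul_mem (hZle (Nat.gcdA m (n h))) h1)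
        (O.mul_mem (hZle (Nat.gcdB m (n h))) h2)
      have e2 : (d : K) * y = ((Nat.gcdA m (n h) : ℤ) : K) * ((m : K) * y)
          + ((Nat.gcdB m (n h) : ℤ) : K) * ((n h : K) * y) := by
        rw [hbezK]; ring
      rw [e2]; exact hsum
    have hmd : m ≤ d := hmmin d hdpos hdmem
    have hdm : d = m := le_antisymm (Nat.le_of_dvd hm (Nat.gcd_dvd_left _ _)) hmd
    exact hdm ▸ Nat.gcd_dvd_right m (n h)
  -- main membership lemma
  have main : ∀ h ∈ H, ∀ y : K, IsIntegral ℤ y →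
      (h + (m : K) * y ∈ I h ∧ (m : K) * y ∈ I h) := by
    intro h hh y hy
    have hne' := hne h hh
    have hNne' := hNne h hh
    rw [hI h hh]
    by_cases P : ∀ y : K, IsIntegral ℤ y → ((n h : K) / h) * y ∈ O
    · rw [if_pos P]
      obtain ⟨k, hk⟩ := hdvd h hh P
      have hkpos : 0 < k := by
        rcases Nat.eq_zero_or_pos k with h0 | h0
        · exfalso; rw [h0, Nat.mul_zero] at hk; exact (hn h hh).1.ne' hk
        · exact h0
      have hkK : ((k : K)) ≠ 0 := Nat.cast_ne_zero.mpr hkpos.ne'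
      have hmkK : (m : K) * (k : K) = (n h : K) := by exact_mod_cast congrArg (Nat.cast : ℕ → K) hk.symm
      constructor
      · refine ⟨(hH1 h hh).add (hmint.mul hy),
          (k : K) + (n h : K) / h * y, O.add_mem (natCast_mem O k) (P y hy), ?_⟩
        rw [← hmkK]
        field_simp
      · refine ⟨hmint.mul hy, (n h : K) / h * y, P y hy, ?_⟩
        field_simp
      -- done
    · rw [if_neg P]
      constructor
      · refine ⟨(hH1 h hh).add (hmint.mul hy),
          (n h : K) + (m : K) * ((n h : K) / h * y),
          O.add_mem (natCast_mem O (n h)) (hmO _ ((h'int h hh).mul hy)), ?_⟩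
        field_simp
      · refine ⟨hmint.mul hy, (m : K) * ((n h : K) / h * y), hmO _ ((h'int h hh).mul hy), ?_⟩
        field_simp
  have hsub : ∀ h ∈ H, I h ⊆ {x : K | IsIntegral ℤ x} := by
    intro h hh
    rw [hI h hh]
    split_ifs <;> intro x hx <;> exact hx.1
  have hstrict : ∀ h ∈ H, I h ⊂ {x : K | IsIntegral ℤ x} := by
    intro h hh
    have hne' := hne h hh
    have hNne' := hNne h hh
    rw [Set.ssubset_def]
    refine ⟨hsub h hh, fun hsup => ?_⟩
    by_cases P : ∀ y : K, IsIntegral ℤ y → ((n h : K) / h) * y ∈ O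
    · have h1 : (1 : K) ∈ I h := hsup isIntegral_one
      rw [hI h hh, if_pos P] at h1
      obtain ⟨-, y, hyO, hy⟩ := h1
      obtain ⟨k, hk⟩ := hdvd h hh P
      have hkpos : 0 < k := by
        rcases Nat.eq_zero_or_pos k with h0 | h0
        · exfalso; rw [h0, Nat.mul_zero] at hk; exact (hn h hh).1.ne' hk
        · exact h0
      have hmkK : (m : K) * (k : K) = (n h : K) := by exact_mod_cast congrArg (Nat.cast : ℕ → K) hk.symm
      have hy' : (n h : K) = h * ((m : K) * y) := by
        field_simp at hy
        linear_combination hy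
      have hky : (k : K) = h * y := by
        apply mul_left_cancel₀ hmK
        linear_combination hy' + hmkK
      have hle : n h ≤ k := hnmin h hh k hkpos (fun t ht =>
        ⟨y * t, (hOsub y hyO).mul ht, by rw [hky]; ring⟩)
      have h2k : 2 * k ≤ m * k := Nat.mul_le_mul_right k hm1
      rw [← hk] at h2k
      omega
    · push_neg at P
      obtain ⟨y₀, hy₀int, hy₀O⟩ := P
      have hy₀ : y₀ ∈ I h := hsup hy₀int
      rw [hI h hh, if_neg (by push_neg; exact ⟨y₀, hy₀int, hy₀O⟩)] at hy₀
      obtain ⟨-, w, hwO, hw⟩ := hy₀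
      apply hy₀O
      have e : (n h : K) / h * y₀ = w := by
        rw [hw]; field_simp
      rw [e]; exact hwO
  refine ⟨fun h hh => ⟨fun y hy => (main h hh y hy).1, hstrict h hh⟩, ?_⟩
  ext x
  simp only [Set.mem_setOf_eq, Set.mem_iUnion, exists_prop]
  constructor
  · intro hx
    by_cases hxm : ∃ y : K, IsIntegral ℤ y ∧ x = (m : K) * y
    · obtain ⟨x₀, hx₀int, hx₀O⟩ : ∃ x₀ : K, IsIntegral ℤ x₀ ∧ x₀ ∉ O := by
        by_contra hc
        push_neg at hc
        apply hnonmax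
        ext z
        simp only [SetLike.mem_coe, Set.mem_setOf_eq]
        exact ⟨hOsub z, fun hz => hc z hz⟩
      have hx₀nm : ¬ ∃ y : K, IsIntegral ℤ y ∧ x₀ = (m : K) * y := by
        rintro ⟨y, hy, rfl⟩
        exact hx₀O (hmO y hy)
      obtain ⟨h, hh, -⟩ := hH3 x₀ hx₀int hx₀nm
      obtain ⟨y, hy, rfl⟩ := hxm
      exact ⟨h, hh, (main h hh y hy).2⟩
    · obtain ⟨h, hh, y, hy, hxy⟩ := hH3 x hx hxm
      have e : x = h + (m : K) * y := by linear_combination hxy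
      exact ⟨h, hh, e ▸ (main h hh y hy).1⟩
  · rintro ⟨h, hh, hx⟩
    exact hsub h hh hx
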